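/- For any complex numbers a and T with |a| ≥ 2|T| and Re(a) < 0, the principal square roots (chosen with nonnegative imaginary part) satisfy |Im √(a+T) − Im √a| ≤ √|T|. -/

import Mathlib

/-- For complex `a, T` with `|a| ≥ 2|T|` and `Re a < 0`, the square roots
chosen with nonnegative imaginary part satisfy
`|Im √(a+T) − Im √a| ≤ √|T|`. -/
theorem stmt2 (a T w₁ w₂ : ℂ) (haT : 2 * ‖T‖ ≤ ‖a‖)
    (hre : a.re < 0) (h₁ : w₁ ^ 2 = a + T) (h₂ : w₂ ^ 2 = a)
    (him₁ : 0 ≤ w₁.im) (him₂ : 0 ≤ w₂.im) :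
    |w₁.im - w₂.im| ≤ Real.sqrt ‖T‖ := by
  have key : ∀ w z : ℂ, w ^ 2 = z → 2 * w.im ^ 2 = ‖z‖ - z.re := by
    intro w z h
    have h1 : ‖z‖ = w.re ^ 2 + w.im ^ 2 := by
      rw [← h, norm_pow, Complex.sq_norm, Complex.normSq_apply]; ring
    have h2 : z.re = w.re ^ 2 - w.im ^ 2 := by
      rw [← h, pow_two, Complex.mul_re]; ring
    rw [h1, h2]; ring
  have e1 := key w₁ (a + T) h₁
  have e2 := key w₂ a h₂
  set x := w₁.im
  set y := w₂.im
  set t := ‖T‖ with ht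
  have hre' : -a.re ≤ ‖a‖ := by
    have := Complex.abs_re_le_norm a
    rw [abs_le] at this; linarith [this.1]
  have habsdiff : |‖a + T‖ - ‖a‖| ≤ t := by
    have := abs_norm_sub_norm_le (a + T) a
    simpa using this
  have hTre : |T.re| ≤ t := Complex.abs_re_le_norm T
  have hdiff : |2 * x ^ 2 - 2 * y ^ 2| ≤ 2 * t := by
    rw [e1, e2]
    have hr : (a + T).re = a.re + T.re := by simp
    rw [abs_le] at habsdiff hTre ⊢
    constructor <;> (rw [hr]; linarith [habsdiff.1, habsdiff.2, hTre.1, hTre.2])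
  have hty : t ≤ y ^ 2 := by linarith
  have hy : 0 < y := by nlinarith
  have hs : Real.sqrt t ≤ y := by
    calc Real.sqrt t ≤ Real.sqrt (y ^ 2) := Real.sqrt_le_sqrt hty
    _ = y := by rw [Real.sqrt_sq him₂]
  have hst : Real.sqrt t ^ 2 = t := Real.sq_sqrt (norm_nonneg T)
  have hsnn : 0 ≤ Real.sqrt t := Real.sqrt_nonneg t
  rw [abs_le] at hdiff ⊢
  constructor
  · nlinarith [hdiff.1, mul_nonneg hsnn him₁]
  · nlinarith [hdiff.2, mul_nonneg hsnn him₁]
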